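/- Let q be a prime power, ψ : F_q → ℂ the additive character ψ(x) = exp(2πi Tr(x)/p) where p is the characteristic, and X, Y ⊆ F_q finite sets. Then |Σ_{x∈X} Σ_{y∈Y} ψ(xy)|⁴ ≤ q · |X|³ · E(Y), where E(Y) is the additive energy of Y. -/

import Mathlib

open Finset

/-- The canonical additive character `ψ(x) = e^{2πi Tr(x)/p}` of a finite
field `F` of characteristic `p`. -/
noncomputable def canonChar (p : ℕ) (F : Type*) [Field F] [Fintype F]
    [Algebra (ZMod p) F] (x : F) : ℂ :=
  Complex.exp (2 * Real.pi * Complex.I *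
    ((Algebra.trace (ZMod p) F x).val : ℂ) / p)

private lemma aux_key (F : Type*) [Field F] [Fintype F] [DecidableEq F]
    (Ψ : AddChar F ℂ)
    (hconj : ∀ a : F, (starRingEnd ℂ) (Ψ a) = Ψ (-a))
    (Y : Finset F) (x : F) :
    ((‖∑ y ∈ Y, Ψ (x * y)‖) : ℂ) ^ 4
      = ∑ z ∈ (Y ×ˢ Y) ×ˢ (Y ×ˢ Y), Ψ (x * (z.1.1 + z.2.1 - z.1.2 - z.2.2)) := by
  have h1 : (starRingEnd ℂ) (∑ y ∈ Y, Ψ (x * y)) = ∑ y ∈ Y, Ψ (-(x * y)) := by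
    rw [map_sum]; exact Finset.sum_congr rfl fun y _ => hconj _
  have h2 : ((‖∑ y ∈ Y, Ψ (x * y)‖) : ℂ) ^ 4
      = ((starRingEnd ℂ) (∑ y ∈ Y, Ψ (x * y)) * (∑ y ∈ Y, Ψ (x * y))) ^ 2 := by
    rw [mul_comm, Complex.mul_conj]; norm_cast; rw [← Complex.sq_norm]; ring
  rw [h2, h1, sq]
  simp only [Finset.sum_product, Finset.sum_mul, Finset.mul_sum]
  refine Finset.sum_congr rfl fun y1 _ => Finset.sum_congr rfl fun y3 _ =>
    Finset.sum_congr rfl fun y2 _ => Finset.sum_congr rfl fun y4 _ => ?_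
  rw [← AddChar.map_add_eq_mul, ← AddChar.map_add_eq_mul, ← AddChar.map_add_eq_mul]
  congr 1
  ring

private lemma aux_energy (F : Type*) [Field F] [Fintype F] [DecidableEq F]
    (Ψ : AddChar F ℂ)
    (hs : ∀ a : F, ∑ x : F, Ψ (x * a) = if a = 0 then (Fintype.card F : ℂ) else 0)
    (hconj : ∀ a : F, (starRingEnd ℂ) (Ψ a) = Ψ (-a))
    (Y : Finset F) :
    ∑ x : F, (‖∑ y ∈ Y, Ψ (x * y)‖) ^ 4
      = (Fintype.card F : ℝ) *
        ((((Y ×ˢ Y) ×ˢ (Y ×ˢ Y)).filter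
            (fun z => z.1.1 + z.2.1 = z.1.2 + z.2.2)).card : ℝ) := by
  have hc : ((∑ x : F, (‖∑ y ∈ Y, Ψ (x * y)‖) ^ 4 : ℝ) : ℂ)
      = ((Fintype.card F : ℝ) *
        ((((Y ×ˢ Y) ×ˢ (Y ×ˢ Y)).filter
            (fun z => z.1.1 + z.2.1 = z.1.2 + z.2.2)).card : ℝ) : ℂ) := by
    push_cast
    calc (∑ x : F, ((‖∑ y ∈ Y, Ψ (x * y)‖ : ℂ)) ^ 4)
        = ∑ x : F, ∑ z ∈ (Y ×ˢ Y) ×ˢ (Y ×ˢ Y),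
            Ψ (x * (z.1.1 + z.2.1 - z.1.2 - z.2.2)) :=
          Finset.sum_congr rfl fun x _ => aux_key F Ψ hconj Y x
      _ = ∑ z ∈ (Y ×ˢ Y) ×ˢ (Y ×ˢ Y), ∑ x : F,
            Ψ (x * (z.1.1 + z.2.1 - z.1.2 - z.2.2)) := Finset.sum_comm
      _ = ∑ z ∈ (Y ×ˢ Y) ×ˢ (Y ×ˢ Y),
            if z.1.1 + z.2.1 = z.1.2 + z.2.2 then (Fintype.card F : ℂ) else 0 := by
          refine Finset.sum_congr rfl fun z _ => ?_
          rw [hs]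
          congr 1
          simp [sub_eq_zero, sub_eq_iff_eq_add]
          constructor <;> intro h <;> linear_combination h
      _ = _ := by
          rw [← Finset.sum_filter, Finset.sum_const, nsmul_eq_mul]
          ring
  exact_mod_cast hc

private lemma aux_bound (F : Type*) [Field F] [Fintype F] [DecidableEq F]
    (Ψ : AddChar F ℂ) (X Y : Finset F) (q E : ℝ)
    (henergy : ∑ x : F, (‖∑ y ∈ Y, Ψ (x * y)‖) ^ 4 = q * E) :
    ‖∑ x ∈ X, ∑ y ∈ Y, Ψ (x * y)‖ ^ 4 ≤ q * (X.card : ℝ) ^ 3 * E := by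
  set g : F → ℝ := fun x => ‖∑ y ∈ Y, Ψ (x * y)‖ with hg
  have hS : ‖∑ x ∈ X, ∑ y ∈ Y, Ψ (x * y)‖ ≤ ∑ x ∈ X, g x := by
    simpa [hg] using norm_sum_le X (fun x => ∑ y ∈ Y, Ψ (x * y))
  have h1 : (∑ x ∈ X, g x) ^ 2 ≤ (X.card : ℝ) * ∑ x ∈ X, g x ^ 2 :=
    sq_sum_le_card_mul_sum_sq
  have h2 : (∑ x ∈ X, g x ^ 2) ^ 2 ≤ (X.card : ℝ) * ∑ x ∈ X, g x ^ 4 := by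
    have := sq_sum_le_card_mul_sum_sq (s := X) (f := fun x => g x ^ 2)
    simpa [← pow_mul] using this
  have h3 : ∑ x ∈ X, g x ^ 4 ≤ q * E := by
    rw [← henergy]
    exact Finset.sum_le_sum_of_subset_of_nonneg (Finset.subset_univ X)
      (fun x _ _ => by positivity)
  calc ‖∑ x ∈ X, ∑ y ∈ Y, Ψ (x * y)‖ ^ 4
      ≤ (∑ x ∈ X, g x) ^ 4 := by
        exact pow_le_pow_left₀ (norm_nonneg _) hS 4
    _ = ((∑ x ∈ X, g x) ^ 2) ^ 2 := by ring
    _ ≤ ((X.card : ℝ) * ∑ x ∈ X, g x ^ 2) ^ 2 := pow_le_pow_left₀ (sq_nonneg _) h1 2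
    _ = (X.card : ℝ) ^ 2 * (∑ x ∈ X, g x ^ 2) ^ 2 := by ring
    _ ≤ (X.card : ℝ) ^ 2 * ((X.card : ℝ) * ∑ x ∈ X, g x ^ 4) := by
        gcongr
    _ = (X.card : ℝ) ^ 3 * ∑ x ∈ X, g x ^ 4 := by ring
    _ ≤ (X.card : ℝ) ^ 3 * (q * E) := by gcongr
    _ = q * (X.card : ℝ) ^ 3 * E := by ring

theorem bilinear_char_sum_fourth_power
    (p : ℕ) (hp : p.Prime) (F : Type*) [Field F] [Fintype F]
    [Algebra (ZMod p) F] [DecidableEq F] (X Y : Finset F) :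
    ‖∑ x ∈ X, ∑ y ∈ Y, canonChar p F (x * y)‖ ^ 4 ≤
      (Fintype.card F : ℝ) * (X.card : ℝ) ^ 3 *
        ((((Y ×ˢ Y) ×ˢ (Y ×ˢ Y)).filter
            (fun z => z.1.1 + z.2.1 = z.1.2 + z.2.2)).card : ℝ) := by
  haveI : Fact p.Prime := ⟨hp⟩
  haveI : NeZero p := ⟨hp.ne_zero⟩
  have hcharF : CharP F p :=
    charP_of_injective_ringHom (algebraMap (ZMod p) F).injective p
  have hring : ringChar F = p := ringChar.eq F p
  subst hring
  have hprim : IsPrimitiveRoot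
      (Complex.exp (2 * Real.pi * Complex.I / (ringChar F))) (ringChar F) :=
    Complex.isPrimitiveRoot_exp _ hp.ne_zero
  have hζ : (Complex.exp (2 * Real.pi * Complex.I / (ringChar F))) ^ (ringChar F) = 1 :=
    hprim.pow_eq_one
  set ψ0 : AddChar (ZMod (ringChar F)) ℂ := AddChar.zmodChar (ringChar F) hζ with hψ0
  set Ψ : AddChar F ℂ :=
    ψ0.compAddMonoidHom (Algebra.trace (ZMod (ringChar F)) F).toAddMonoidHom with hΨ
  have hΨapp : ∀ x : F, Ψ x =
      Complex.exp (2 * Real.pi * Complex.I / (ringChar F)) ^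
        (Algebra.trace (ZMod (ringChar F)) F x).val :=
    fun _ => rfl
  have hcanon : ∀ x : F, canonChar (ringChar F) F x = Ψ x := by
    intro x
    rw [hΨapp, ← Complex.exp_nat_mul, canonChar]
    congr 1
    ring
  have hψ0prim : ψ0.IsPrimitive :=
    AddChar.zmodChar_primitive_of_primitive_root _ hprim
  have hΨne : Ψ ≠ 1 := by
    obtain ⟨b, hb⟩ := FiniteField.trace_to_zmod_nondegenerate F (one_ne_zero (α := F))
    rw [one_mul] at hb
    refine AddChar.ne_one_iff.2 ⟨b, fun hf => hb ?_⟩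
    exact (hψ0prim.zmod_char_eq_one_iff _ (Algebra.trace (ZMod (ringChar F)) F b)).mp hf
  have hΨprim : Ψ.IsPrimitive := AddChar.IsPrimitive.of_ne_one hΨne
  have hs : ∀ a : F, ∑ x : F, Ψ (x * a) = if a = 0 then (Fintype.card F : ℂ) else 0 := by
    intro a
    simpa using AddChar.sum_mulShift a hΨprim
  have hconj : ∀ a : F, (starRingEnd ℂ) (Ψ a) = Ψ (-a) := by
    intro a
    rw [AddChar.starComp_apply hp.pos, AddChar.inv_apply]
  have henergy := aux_energy F Ψ hs hconj Y
  have hmain := aux_bound F Ψ X Y (Fintype.card F : ℝ) _ henergy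
  calc ‖∑ x ∈ X, ∑ y ∈ Y, canonChar (ringChar F) F (x * y)‖ ^ 4
      = ‖∑ x ∈ X, ∑ y ∈ Y, Ψ (x * y)‖ ^ 4 := by
        congr 2
        exact Finset.sum_congr rfl fun x _ => Finset.sum_congr rfl fun y _ => hcanon _
    _ ≤ _ := hmain
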